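/- Let Z be a random variable on ℝᵈ with distribution ρ. Then E[F_σ(Z) · 1{g(Z) > 0}] ≤ e^{-μ/σ} + P(0 < g(Z) < 2μ), where F_σ(x) = (1 + exp((-μ + g(x))/σ))⁻¹. -/

import Mathlib

open MeasureTheory

theorem stmt3 {d : ℕ} {Ω : Type*} [MeasurableSpace Ω] (ℙ : Measure Ω)
    [IsProbabilityMeasure ℙ]
    (g : (Fin d → ℝ) → ℝ) (hg : Measurable g)
    (Z : Ω → (Fin d → ℝ)) (hZ : Measurable Z)
    (σ μ : ℝ) (hσ : 0 < σ) (hμ : 0 < μ) :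
    ∫ ω, (if 0 < g (Z ω) then (1 + Real.exp ((-μ + g (Z ω)) / σ))⁻¹ else 0) ∂ℙ
      ≤ Real.exp (-μ / σ) + (ℙ {ω | 0 < g (Z ω) ∧ g (Z ω) < 2 * μ}).toReal := by
  set S : Set Ω := {ω | 0 < g (Z ω) ∧ g (Z ω) < 2 * μ} with hS
  have hSm : MeasurableSet S := by
    apply MeasurableSet.inter
    · exact measurableSet_lt measurable_const (hg.comp hZ)
    · exact measurableSet_lt (hg.comp hZ) measurable_const
  set f : Ω → ℝ := fun ω =>
    if 0 < g (Z ω) then (1 + Real.exp ((-μ + g (Z ω)) / σ))⁻¹ else 0 with hf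
  have hf_nonneg : ∀ ω, 0 ≤ f ω := by
    intro ω
    simp only [hf]
    split
    · positivity
    · exact le_rfl
  have hf_le_one : ∀ ω, f ω ≤ 1 := by
    intro ω
    simp only [hf]
    split
    · rw [inv_le_one_iff₀]
      right
      nlinarith [Real.exp_pos ((-μ + g (Z ω)) / σ)]
    · norm_num
  have hfm : Measurable f := by
    apply Measurable.ite
    · exact measurableSet_lt measurable_const (hg.comp hZ)
    · exact ((((hg.comp hZ).const_add (-μ)).div_const σ).exp.const_add 1).inv
    · exact measurable_const
  have hfi : Integrable f ℙ := by
    apply (integrable_const (1:ℝ)).mono' hfm.aestronglyMeasurable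
    filter_upwards with ω
    rw [Real.norm_eq_abs, abs_of_nonneg (hf_nonneg ω)]
    exact hf_le_one ω
  have hgi : Integrable (fun ω => Real.exp (-μ / σ) + S.indicator (fun _ => (1:ℝ)) ω) ℙ := by
    exact (integrable_const _).add ((integrable_const (1:ℝ)).indicator hSm)
  have hmono : ∀ ω, f ω ≤ Real.exp (-μ / σ) + S.indicator (fun _ => (1:ℝ)) ω := by
    intro ω
    by_cases h1 : 0 < g (Z ω)
    · by_cases h2 : g (Z ω) < 2 * μ
      · have hmem : ω ∈ S := ⟨h1, h2⟩
        rw [Set.indicator_of_mem hmem]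
        have := hf_le_one ω
        have := Real.exp_pos (-μ / σ)
        linarith
      · have hmem : ω ∉ S := fun h => h2 h.2
        rw [Set.indicator_of_notMem hmem]
        simp only [hf, if_pos h1, add_zero]
        have hx : μ / σ ≤ (-μ + g (Z ω)) / σ := by
          apply div_le_div_of_nonneg_right ?_ hσ.le |>.trans_eq rfl
          linarith
        calc (1 + Real.exp ((-μ + g (Z ω)) / σ))⁻¹
            ≤ (Real.exp ((-μ + g (Z ω)) / σ))⁻¹ := by
              apply inv_anti₀ (Real.exp_pos _)
              linarith
          _ = Real.exp (-((-μ + g (Z ω)) / σ)) := by rw [Real.exp_neg]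
          _ ≤ Real.exp (-μ / σ) := by
              apply Real.exp_le_exp.mpr
              rw [neg_div]
              linarith
    · simp only [hf, if_neg h1]
      have : (0:ℝ) ≤ S.indicator (fun _ => (1:ℝ)) ω := Set.indicator_nonneg (fun _ _ => zero_le_one) ω
      have := Real.exp_pos (-μ / σ)
      linarith
  calc ∫ ω, f ω ∂ℙ ≤ ∫ ω, (Real.exp (-μ / σ) + S.indicator (fun _ => (1:ℝ)) ω) ∂ℙ :=
        integral_mono hfi hgi hmono
    _ = Real.exp (-μ / σ) + (ℙ S).toReal := by
        rw [integral_add (integrable_const _) ((integrable_const (1:ℝ)).indicator hSm),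
          integral_const, integral_indicator_const _ hSm]
        simp [measure_univ]
        rfl
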